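/- Quadratic growth after n i.i.d. uniform arrivals: let ζ be a finite counting measure on the circle S of circumference ℓ, 0 < a ≤ ℓ/2, and let X₁,…,Xₙ be i.i.d. uniform on S. Then E‖ζ + ∑_{i=1}^n δ_{X_i}‖_a² = ‖ζ‖_a² + 2n(a²/ℓ)ζ(S) + n·a + (n² - n)(a²/ℓ). -/

import Mathlib

open Finset MeasureTheory

/-- The quadratic functional `‖ζ‖ₐ² = ∑∑ ζ(x) ζ(y) (a - d(x,y))₊` of a finite counting
measure on the circle of circumference `ℓ`. -/
noncomputable def quada (ℓ a : ℝ) (ζ : AddCircle ℓ →₀ ℕ) : ℝ :=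
  ∑ x ∈ ζ.support, ∑ y ∈ ζ.support, (ζ x : ℝ) * (ζ y : ℝ) * max (a - dist x y) 0


variable {ℓ : ℝ} [Fact (0 < ℓ)] {a : ℝ}
set_option linter.unusedSectionVars false

noncomputable def ker (ℓ a : ℝ) (x y : AddCircle ℓ) : ℝ := max (a - dist x y) 0

lemma continuous_ker : Continuous fun p : AddCircle ℓ × AddCircle ℓ => ker ℓ a p.1 p.2 :=
  (continuous_const.sub (continuous_dist.comp (continuous_fst.prodMk continuous_snd))).max
    continuous_const

lemma integral_abs_piece (ha : 0 < a) (haℓ : a ≤ ℓ / 2) :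
    ∫ t in (-(ℓ/2))..(-(ℓ/2) + ℓ), max (a - |t|) 0 = a ^ 2 := by
  have hℓ : 0 < ℓ := Fact.out
  have hi : ∀ u v : ℝ, IntervalIntegrable (fun t => max (a - |t|) 0) volume u v :=
    fun u v => ((continuous_const.sub continuous_abs).max continuous_const).intervalIntegrable u v
  have h1 : -(ℓ/2) + ℓ = ℓ/2 := by ring
  rw [h1, ← intervalIntegral.integral_add_adjacent_intervals (hi (-(ℓ/2)) (-a)) (hi (-a) (ℓ/2)),
      ← intervalIntegral.integral_add_adjacent_intervals (hi (-a) a) (hi a (ℓ/2))]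
  have e1 : ∫ t in (-(ℓ/2))..(-a), max (a - |t|) 0 = 0 := by
    rw [intervalIntegral.integral_congr (g := fun _ => (0:ℝ)) ?_, intervalIntegral.integral_const,
      smul_zero]
    intro t ht
    rw [Set.uIcc_of_le (by linarith)] at ht
    have : a ≤ |t| := by rw [abs_of_nonpos (by linarith [ht.2])]; linarith [ht.2]
    simp [max_eq_right, sub_nonpos.2 this]
  have e3 : ∫ t in a..(ℓ/2), max (a - |t|) 0 = 0 := by
    rw [intervalIntegral.integral_congr (g := fun _ => (0:ℝ)) ?_, intervalIntegral.integral_const,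
      smul_zero]
    intro t ht
    rw [Set.uIcc_of_le (by linarith)] at ht
    have : a ≤ |t| := by rw [abs_of_nonneg (by linarith [ht.1])]; linarith [ht.1]
    simp [max_eq_right, sub_nonpos.2 this]
  have e2 : ∫ t in (-a)..a, max (a - |t|) 0 = a ^ 2 := by
    rw [← intervalIntegral.integral_add_adjacent_intervals (hi (-a) 0) (hi 0 a)]
    have l1 : ∫ t in (-a)..(0:ℝ), max (a - |t|) 0 = ∫ t in (-a)..(0:ℝ), (a + t) := by
      apply intervalIntegral.integral_congr
      intro t ht
      rw [Set.uIcc_of_le (by linarith)] at ht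
      show max (a - |t|) 0 = a + t
      rw [abs_of_nonpos ht.2, sub_neg_eq_add, max_eq_left (by linarith [ht.1])]
    have l2 : ∫ t in (0:ℝ)..a, max (a - |t|) 0 = ∫ t in (0:ℝ)..a, (a - t) := by
      apply intervalIntegral.integral_congr
      intro t ht
      rw [Set.uIcc_of_le (by linarith)] at ht
      show max (a - |t|) 0 = a - t
      rw [abs_of_nonneg ht.1, max_eq_left (by linarith [ht.2])]
    rw [l1, l2, intervalIntegral.integral_add intervalIntegrable_const
        intervalIntegral.intervalIntegrable_id,
      intervalIntegral.integral_sub intervalIntegrable_const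
        intervalIntegral.intervalIntegrable_id]
    simp only [integral_id, intervalIntegral.integral_const, smul_eq_mul]
    ring
  rw [e1, e2, e3]; ring

lemma integral_ker (ha : 0 < a) (haℓ : a ≤ ℓ / 2) (x : AddCircle ℓ) :
    ∫ y, ker ℓ a x y ∂(AddCircle.haarAddCircle) = a ^ 2 / ℓ := by
  have hℓ : 0 < ℓ := Fact.out
  have h0 : (fun y : AddCircle ℓ => ker ℓ a x y) = fun y => max (a - ‖y - x‖) 0 := by
    funext y; rw [ker, dist_eq_norm, norm_sub_rev]
  rw [h0, integral_sub_right_eq_self (μ := AddCircle.haarAddCircle)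
      (fun y : AddCircle ℓ => max (a - ‖y‖) 0) x]
  have hv : ∫ y : AddCircle ℓ, max (a - ‖y‖) 0 ∂(volume)
      = (ENNReal.ofReal ℓ).toReal • ∫ y : AddCircle ℓ, max (a - ‖y‖) 0
        ∂(AddCircle.haarAddCircle) := by
    rw [AddCircle.volume_eq_smul_haarAddCircle, integral_smul_measure]
  have hI : ∫ y : AddCircle ℓ, max (a - ‖y‖) 0 ∂(volume) = a ^ 2 := by
    rw [← AddCircle.intervalIntegral_preimage ℓ (-(ℓ/2)) (fun y : AddCircle ℓ => max (a - ‖y‖) 0)]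
    rw [← integral_abs_piece ha haℓ]
    apply intervalIntegral.integral_congr
    intro t ht
    rw [Set.uIcc_of_le (by linarith)] at ht
    have hb : |t| ≤ |ℓ| / 2 := by
      rw [abs_of_pos hℓ, abs_le]; constructor <;> [linarith [ht.1]; linarith [ht.2]]
    show max (a - ‖(t : AddCircle ℓ)‖) 0 = max (a - |t|) 0
    rw [(AddCircle.norm_coe_eq_abs_iff ℓ hℓ.ne').2 hb]
  rw [ENNReal.toReal_ofReal hℓ.le, hI] at hv
  field_simp at hv ⊢
  rw [smul_eq_mul] at hv; linarith [hv]



noncomputable def Bq (ℓ a : ℝ) (μ ν : AddCircle ℓ →₀ ℕ) : ℝ :=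
  ∑ x ∈ μ.support, ∑ y ∈ ν.support, (μ x : ℝ) * (ν y : ℝ) * ker ℓ a x y

lemma quada_eq_Bq (ζ : AddCircle ℓ →₀ ℕ) : quada ℓ a ζ = Bq ℓ a ζ ζ := rfl

lemma Bq_eq_sum {μ ν : AddCircle ℓ →₀ ℕ} {s t : Finset (AddCircle ℓ)}
    (hs : μ.support ⊆ s) (ht : ν.support ⊆ t) :
    Bq ℓ a μ ν = ∑ x ∈ s, ∑ y ∈ t, (μ x : ℝ) * (ν y : ℝ) * ker ℓ a x y := by
  have h1 : ∀ x : AddCircle ℓ, ∑ y ∈ ν.support, (μ x : ℝ) * (ν y : ℝ) * ker ℓ a x y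
      = ∑ y ∈ t, (μ x : ℝ) * (ν y : ℝ) * ker ℓ a x y := fun x =>
    Finset.sum_subset ht fun y _ hy => by
      simp [Finsupp.notMem_support_iff.mp hy]
  unfold Bq
  simp_rw [h1]
  refine Finset.sum_subset hs fun x _ hx => ?_
  simp [Finsupp.notMem_support_iff.mp hx]

lemma Bq_add_left (μ₁ μ₂ ν : AddCircle ℓ →₀ ℕ) :
    Bq ℓ a (μ₁ + μ₂) ν = Bq ℓ a μ₁ ν + Bq ℓ a μ₂ ν := by
  rw [Bq_eq_sum (Finsupp.support_add) (Finset.Subset.refl _),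
      Bq_eq_sum (Finset.subset_union_left (s₂ := μ₂.support)) (Finset.Subset.refl _),
      Bq_eq_sum (Finset.subset_union_right (s₁ := μ₁.support)) (Finset.Subset.refl _),
      ← Finset.sum_add_distrib]
  refine Finset.sum_congr rfl fun x _ => ?_
  rw [← Finset.sum_add_distrib]
  refine Finset.sum_congr rfl fun y _ => ?_
  rw [Finsupp.add_apply]
  push_cast
  ring

lemma Bq_comm (μ ν : AddCircle ℓ →₀ ℕ) : Bq ℓ a μ ν = Bq ℓ a ν μ := by
  rw [Bq, Bq, Finset.sum_comm]
  exact Finset.sum_congr rfl fun y _ => Finset.sum_congr rfl fun x _ => by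
    rw [ker, ker, dist_comm]; ring

lemma Bq_add_right (μ ν₁ ν₂ : AddCircle ℓ →₀ ℕ) :
    Bq ℓ a μ (ν₁ + ν₂) = Bq ℓ a μ ν₁ + Bq ℓ a μ ν₂ := by
  rw [Bq_comm, Bq_add_left, Bq_comm ν₁, Bq_comm ν₂]

lemma Bq_zero_right (μ : AddCircle ℓ →₀ ℕ) : Bq ℓ a μ 0 = 0 := by
  simp [Bq]

lemma Bq_sum_right {ι : Type*} (μ : AddCircle ℓ →₀ ℕ) (s : Finset ι)
    (ν : ι → (AddCircle ℓ →₀ ℕ)) :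
    Bq ℓ a μ (∑ i ∈ s, ν i) = ∑ i ∈ s, Bq ℓ a μ (ν i) := by
  classical
  induction s using Finset.induction_on with
  | empty => simp [Bq_zero_right]
  | insert x s hx ih => rw [Finset.sum_insert hx, Finset.sum_insert hx,
      Bq_add_right, ih]

lemma Bq_single_right (μ : AddCircle ℓ →₀ ℕ) (y : AddCircle ℓ) :
    Bq ℓ a μ (Finsupp.single y 1) = ∑ x ∈ μ.support, (μ x : ℝ) * ker ℓ a x y := by
  rw [Bq]
  rw [Finsupp.support_single_ne_zero _ one_ne_zero]
  simp

lemma Bq_single_single (x y : AddCircle ℓ) :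
    Bq ℓ a (Finsupp.single x 1) (Finsupp.single y 1) = ker ℓ a x y := by
  rw [Bq, Finsupp.support_single_ne_zero _ one_ne_zero,
    Finsupp.support_single_ne_zero _ one_ne_zero]
  simp

lemma quada_expand (ζ : AddCircle ℓ →₀ ℕ) {n : ℕ} (X : Fin n → AddCircle ℓ) :
    quada ℓ a (ζ + ∑ i : Fin n, Finsupp.single (X i) 1)
      = quada ℓ a ζ + 2 * ∑ i : Fin n, (∑ x ∈ ζ.support, (ζ x : ℝ) * ker ℓ a x (X i))
        + ∑ i : Fin n, ∑ j : Fin n, ker ℓ a (X i) (X j) := by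
  set Δ : AddCircle ℓ →₀ ℕ := ∑ i : Fin n, Finsupp.single (X i) 1 with hΔ
  rw [quada_eq_Bq, quada_eq_Bq, Bq_add_left, Bq_add_right, Bq_add_right,
    Bq_comm Δ ζ]
  have h1 : Bq ℓ a ζ Δ = ∑ i : Fin n, (∑ x ∈ ζ.support, (ζ x : ℝ) * ker ℓ a x (X i)) := by
    rw [hΔ, Bq_sum_right]
    exact Finset.sum_congr rfl fun i _ => Bq_single_right ζ (X i)
  have h2 : Bq ℓ a Δ Δ = ∑ i : Fin n, ∑ j : Fin n, ker ℓ a (X i) (X j) := by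
    rw [hΔ, Bq_sum_right]
    refine Finset.sum_congr rfl fun j _ => ?_
    rw [Bq_comm, Bq_sum_right]
    exact Finset.sum_congr rfl fun i _ => Bq_single_single _ _
  rw [h1, h2]
  ring


lemma cont_integrable {α : Type*} [TopologicalSpace α] [CompactSpace α] [MeasurableSpace α]
    [OpensMeasurableSpace α] {μ : Measure α} [IsFiniteMeasure μ] {f : α → ℝ}
    (hf : Continuous f) : Integrable f μ :=
  hf.integrable_of_hasCompactSupport (HasCompactSupport.of_compactSpace f)

lemma integral_eval {n : ℕ} (i : Fin n) (f : AddCircle ℓ → ℝ) (hf : Continuous f) :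
    ∫ X : Fin n → AddCircle ℓ, f (X i)
        ∂(Measure.pi fun _ => (AddCircle.haarAddCircle : Measure (AddCircle ℓ)))
      = ∫ y, f y ∂(AddCircle.haarAddCircle) := by
  cases n with
  | zero => exact i.elim0
  | succ m =>
    have hmp := measurePreserving_piFinSuccAbove
      (fun _ : Fin (m+1) => (AddCircle.haarAddCircle : Measure (AddCircle ℓ))) i
    have h1 : ∀ X : Fin (m+1) → AddCircle ℓ,
        f (X i) = (fun p : AddCircle ℓ × (Fin m → AddCircle ℓ) => f p.1)
          ((MeasurableEquiv.piFinSuccAbove (fun _ => AddCircle ℓ) i) X) := by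
      intro X; rfl
    simp_rw [h1]
    rw [← MeasureTheory.integral_map_equiv (MeasurableEquiv.piFinSuccAbove (fun _ => AddCircle ℓ) i)
      (fun p : AddCircle ℓ × (Fin m → AddCircle ℓ) => f p.1), hmp.map_eq]
    rw [integral_prod _ (cont_integrable
      (show Continuous fun p : AddCircle ℓ × (Fin m → AddCircle ℓ) => f p.1 from
        hf.comp continuous_fst))]
    simp

lemma integral_ker_pair (ha : 0 < a) (haℓ : a ≤ ℓ / 2) {n : ℕ} {i j : Fin n} (hij : j ≠ i)
    (hker : ∀ x : AddCircle ℓ, ∫ y, ker ℓ a x y ∂(AddCircle.haarAddCircle) = a ^ 2 / ℓ) :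
    ∫ X : Fin n → AddCircle ℓ, ker ℓ a (X i) (X j)
        ∂(Measure.pi fun _ => (AddCircle.haarAddCircle : Measure (AddCircle ℓ)))
      = a ^ 2 / ℓ := by
  cases n with
  | zero => exact i.elim0
  | succ m =>
    obtain ⟨j', hj'⟩ := Fin.exists_succAbove_eq hij
    have hmp := measurePreserving_piFinSuccAbove
      (fun _ : Fin (m+1) => (AddCircle.haarAddCircle : Measure (AddCircle ℓ))) i
    have hmp2 := hmp.symm (MeasurableEquiv.piFinSuccAbove (fun _ => AddCircle ℓ) i)
    rw [← hmp2.map_eq, MeasureTheory.integral_map_equiv]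
    have h1 : ∀ p : AddCircle ℓ × ((k : Fin m) → AddCircle ℓ),
        ker ℓ a (((MeasurableEquiv.piFinSuccAbove (fun _ => AddCircle ℓ) i).symm p) i)
            (((MeasurableEquiv.piFinSuccAbove (fun _ => AddCircle ℓ) i).symm p) j)
          = ker ℓ a p.1 (p.2 j') := by
      intro p
      rw [← hj']
      rw [show ((MeasurableEquiv.piFinSuccAbove (fun _ => AddCircle ℓ) i).symm p)
          = i.insertNth p.1 p.2 from rfl]
      rw [Fin.insertNth_apply_same, Fin.insertNth_apply_succAbove]
    simp_rw [h1]
    have hcont : Continuous fun p : AddCircle ℓ × (Fin m → AddCircle ℓ) =>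
        ker ℓ a p.1 (p.2 j') := by unfold ker; fun_prop
    rw [integral_prod _ (cont_integrable hcont)]
    have h2 : ∀ x : AddCircle ℓ, ∫ Y : Fin m → AddCircle ℓ, ker ℓ a x (Y j')
        ∂(Measure.pi fun _ => (AddCircle.haarAddCircle : Measure (AddCircle ℓ)))
        = a ^ 2 / ℓ := fun x => by
      rw [integral_eval j' (fun y => ker ℓ a x y) (by unfold ker; fun_prop), hker]
    simp_rw [h2]
    simp

section Main
variable {ℓ : ℝ} [Fact (0 < ℓ)] {a : ℝ}
set_option linter.unusedSectionVars false

lemma ker_self (ha : 0 < a) (x : AddCircle ℓ) : ker ℓ a x x = a := by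
  rw [ker, dist_self, sub_zero]; exact max_eq_left ha.le

theorem quad_after_n_uniform_arrivals' (ℓ : ℝ) [Fact (0 < ℓ)] (a : ℝ) (ha : 0 < a)
    (haℓ : a ≤ ℓ / 2) (n : ℕ) (ζ : AddCircle ℓ →₀ ℕ) :
    (∫ X : Fin n → AddCircle ℓ,
        quada ℓ a (ζ + ∑ i : Fin n, Finsupp.single (X i) 1)
        ∂(Measure.pi fun _ => (AddCircle.haarAddCircle : Measure (AddCircle ℓ))))
      = quada ℓ a ζ + 2 * n * (a ^ 2 / ℓ) * (∑ x ∈ ζ.support, (ζ x : ℝ))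
        + n * a + ((n : ℝ) ^ 2 - n) * (a ^ 2 / ℓ) := by
  have hℓ : 0 < ℓ := Fact.out
  have hker := integral_ker (ℓ := ℓ) ha haℓ
  set π := Measure.pi fun _ : Fin n => (AddCircle.haarAddCircle : Measure (AddCircle ℓ)) with hπ
  set g : AddCircle ℓ → ℝ := fun y => ∑ x ∈ ζ.support, (ζ x : ℝ) * ker ℓ a x y with hg
  have hgc : Continuous g := by
    apply continuous_finset_sum; intro x _; unfold ker; fun_prop
  have hconta : Continuous fun X : Fin n → AddCircle ℓ => 2 * ∑ i : Fin n, g (X i) :=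
    continuous_const.mul (continuous_finset_sum _ fun i _ => hgc.comp (continuous_apply i))
  have hcontb : Continuous fun X : Fin n → AddCircle ℓ =>
      ∑ i : Fin n, ∑ j : Fin n, ker ℓ a (X i) (X j) :=
    continuous_finset_sum _ fun i _ => continuous_finset_sum _ fun j _ => by
      unfold ker; fun_prop
  have step1 : (∫ X : Fin n → AddCircle ℓ,
        quada ℓ a (ζ + ∑ i : Fin n, Finsupp.single (X i) 1) ∂π)
      = ∫ X : Fin n → AddCircle ℓ, (quada ℓ a ζ + 2 * ∑ i : Fin n, g (X i)
          + ∑ i : Fin n, ∑ j : Fin n, ker ℓ a (X i) (X j)) ∂π := by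
    congr 1
    funext X
    exact quada_expand ζ X
  rw [step1, integral_add (f := fun X : Fin n → AddCircle ℓ => quada ℓ a ζ + 2 * ∑ i : Fin n, g (X i)) (cont_integrable (continuous_const.add hconta))
      (cont_integrable hcontb),
    integral_add (integrable_const _) (cont_integrable hconta), integral_const]
  have hprob : IsProbabilityMeasure π := by rw [hπ]; infer_instance
  rw [probReal_univ, one_smul]
  have e1 : (∫ X : Fin n → AddCircle ℓ, 2 * ∑ i : Fin n, g (X i) ∂π)
      = 2 * n * (a ^ 2 / ℓ) * (∑ x ∈ ζ.support, (ζ x : ℝ)) := by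
    rw [integral_const_mul _ _, integral_finset_sum _ fun i _ =>
      cont_integrable (show Continuous fun X : Fin n → AddCircle ℓ => g (X i) from
        hgc.comp (continuous_apply i))]
    have : ∀ i : Fin n, (∫ X : Fin n → AddCircle ℓ, g (X i) ∂π)
        = (a ^ 2 / ℓ) * ∑ x ∈ ζ.support, (ζ x : ℝ) := by
      intro i
      rw [integral_eval i g hgc, hg]
      rw [integral_finset_sum _ fun x _ => cont_integrable (by unfold ker; fun_prop)]
      rw [Finset.mul_sum]
      refine Finset.sum_congr rfl fun x _ => ?_
      rw [integral_const_mul _ _, hker]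
      ring
    simp_rw [this]
    rw [Finset.sum_const, Finset.card_univ, Fintype.card_fin, nsmul_eq_mul]
    ring
  have e2 : (∑ i : Fin n, ∑ j : Fin n, ∫ X : Fin n → AddCircle ℓ, ker ℓ a (X i) (X j) ∂π)
      = n * a + ((n : ℝ) ^ 2 - n) * (a ^ 2 / ℓ) := by
    have hval : ∀ i j : Fin n, (∫ X : Fin n → AddCircle ℓ, ker ℓ a (X i) (X j) ∂π)
        = a ^ 2 / ℓ + (if i = j then a - a ^ 2 / ℓ else 0) := by
      intro i j
      by_cases h : i = j
      · subst h
        simp only [if_pos rfl]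
        have : ∀ X : Fin n → AddCircle ℓ, ker ℓ a (X i) (X i) = a :=
          fun X => ker_self ha (X i)
        simp_rw [this]
        rw [integral_const, probReal_univ, one_smul]
        norm_num
      · rw [if_neg h, add_zero]
        exact integral_ker_pair ha haℓ (fun hh => h hh.symm) hker
    simp_rw [hval, Finset.sum_add_distrib, Finset.sum_ite_eq, Finset.mem_univ, if_pos,
      Finset.sum_const, Finset.card_univ, Fintype.card_fin, nsmul_eq_mul]
    ring
  have e3 : (∫ X : Fin n → AddCircle ℓ,
        ∑ i : Fin n, ∑ j : Fin n, ker ℓ a (X i) (X j) ∂π)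
      = ∑ i : Fin n, ∑ j : Fin n, ∫ X : Fin n → AddCircle ℓ, ker ℓ a (X i) (X j) ∂π := by
    rw [integral_finset_sum _ fun i _ => cont_integrable
        (continuous_finset_sum _ fun j _ => by unfold ker; fun_prop)]
    exact Finset.sum_congr rfl fun i _ => integral_finset_sum _ fun j _ =>
      cont_integrable (by unfold ker; fun_prop)
  rw [e1, e3, e2]
  ring
end Main


/-- Quadratic growth after `n` i.i.d. uniform arrivals:
`E‖ζ + ∑ᵢ δ_{Xᵢ}‖ₐ² = ‖ζ‖ₐ² + 2n(a²/ℓ)ζ(S) + n·a + (n²-n)(a²/ℓ)`. -/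
theorem quad_after_n_uniform_arrivals (ℓ : ℝ) [Fact (0 < ℓ)] (a : ℝ) (ha : 0 < a)
    (haℓ : a ≤ ℓ / 2) (n : ℕ) (ζ : AddCircle ℓ →₀ ℕ) :
    (∫ X : Fin n → AddCircle ℓ,
        quada ℓ a (ζ + ∑ i : Fin n, Finsupp.single (X i) 1)
        ∂(Measure.pi fun _ => (AddCircle.haarAddCircle : Measure (AddCircle ℓ))))
      = quada ℓ a ζ + 2 * n * (a ^ 2 / ℓ) * (∑ x ∈ ζ.support, (ζ x : ℝ))
        + n * a + ((n : ℝ) ^ 2 - n) * (a ^ 2 / ℓ) := by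
  exact quad_after_n_uniform_arrivals' ℓ a ha haℓ n ζ
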